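/- (Proposition 1) Suppose q* ∈ (0,1) with τ* := τ(q*) > 0 satisfies the balance condition s_n(τ*)/s_a(τ*) = E[s_n]/E[s_a] (equivalently, s_n(τ*)·E[s_a] = s_a(τ*)·E[s_n] with s_a(τ*) > 0), and suppose additionally that s_n'(τ*) < 0 < s_a'(τ*) and S(τ*) > 0. Then the robustness function R(q) = (∫₀^{τ(q)} x·s_n(x) dx)/E[s_n] − (∫₀^{τ(q)} x·s_a(x) dx)/E[s_a] has a local maximum at q = q*: there exists ε > 0 such that R(q) ≤ R(q*) for all q ∈ (0,1) with |q − q*| < ε. -/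

import Mathlib

open MeasureTheory Set

/-- **Proposition 1.** Suppose `q* ∈ (0,1)` with `τ* := τ q* > 0` satisfies
the balance condition `s_n τ* * Ea = s_a τ* * En` (with `s_a τ* > 0`), and suppose
additionally that `s_n' τ* < 0 < s_a' τ*` and `S τ* > 0`.  Then the robustness function
`R q = (∫ x in 0..τ q, x * s_n x) / En - (∫ x in 0..τ q, x * s_a x) / Ea` has a local
maximum at `q = q*`: there exists `ε > 0` such that `R q ≤ R q*` for all `q ∈ (0,1)` with
`|q - q*| < ε`. -/
theorem robustness_localMax
    (s_n s_a : ℝ → ℝ) (α : ℝ) (hα : α ∈ Set.Ioo (0 : ℝ) 1)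
    (hsn_smooth : ContDiff ℝ 1 s_n) (hsa_smooth : ContDiff ℝ 1 s_a)
    (hsn_nonneg : ∀ x, 0 ≤ s_n x) (hsa_nonneg : ∀ x, 0 ≤ s_a x)
    (hsn_supp : ∀ x < (0 : ℝ), s_n x = 0) (hsa_supp : ∀ x < (0 : ℝ), s_a x = 0)
    (hsn_int : Integrable s_n) (hsa_int : Integrable s_a)
    (hsn_pdf : ∫ x, s_n x = 1) (hsa_pdf : ∫ x, s_a x = 1)
    (S : ℝ → ℝ) (hS : ∀ x, S x = α * s_n x + (1 - α) * s_a x)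
    (hS_pos : ∀ x > (0 : ℝ), 0 < S x)
    (τ : ℝ → ℝ)
    (hτ : ∀ q ∈ Set.Ioo (0 : ℝ) 1, ∫ x in (0 : ℝ)..(τ q), S x = q)
    (hτ' : ∀ q ∈ Set.Ioo (0 : ℝ) 1, HasDerivAt τ (1 / S (τ q)) q)
    (En Ea : ℝ)
    (hEn : En = ∫ x in Set.Ioi (0 : ℝ), x * s_n x)
    (hEa : Ea = ∫ x in Set.Ioi (0 : ℝ), x * s_a x)
    (hEn_fin : IntegrableOn (fun x => x * s_n x) (Set.Ioi (0 : ℝ)))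
    (hEa_fin : IntegrableOn (fun x => x * s_a x) (Set.Ioi (0 : ℝ)))
    (hEn_pos : 0 < En) (hEa_pos : 0 < Ea)
    (R : ℝ → ℝ)
    (hR : ∀ q, R q = (∫ x in (0 : ℝ)..(τ q), x * s_n x) / En
        - (∫ x in (0 : ℝ)..(τ q), x * s_a x) / Ea)
    (qstar : ℝ) (hqstar : qstar ∈ Set.Ioo (0 : ℝ) 1)
    (τstar : ℝ) (hτstar : τstar = τ qstar)
    (hτstar_pos : 0 < τstar) (hSτstar_pos : 0 < S τstar)
    (hsa_τstar_pos : 0 < s_a τstar)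
    (hbalance : s_n τstar * Ea = s_a τstar * En)
    (hsn' : deriv s_n τstar < 0) (hsa' : 0 < deriv s_a τstar) :
    ∃ ε > 0, ∀ q ∈ Set.Ioo (0 : ℝ) 1, |q - qstar| < ε → R q ≤ R qstar := by

  have hsn_cont : Continuous s_n := hsn_smooth.continuous
  have hsa_cont : Continuous s_a := hsa_smooth.continuous
  have hsn_diff : Differentiable ℝ s_n := hsn_smooth.differentiable one_ne_zero
  have hsa_diff : Differentiable ℝ s_a := hsa_smooth.differentiable one_ne_zero
  have hsn'cont : Continuous (deriv s_n) := hsn_smooth.continuous_deriv le_rfl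
  have hsa'cont : Continuous (deriv s_a) := hsa_smooth.continuous_deriv le_rfl
  set h : ℝ → ℝ := fun t => s_n t / En - s_a t / Ea with hhdef
  have hhdiff : Differentiable ℝ h := (hsn_diff.div_const _).sub (hsa_diff.div_const _)
  have hderivh : ∀ t, deriv h t = deriv s_n t / En - deriv s_a t / Ea := by
    intro t
    rw [hhdef]
    rw [deriv_fun_sub ((hsn_diff t).div_const _) ((hsa_diff t).div_const _),
      deriv_div_const, deriv_div_const]
  have hh'cont : Continuous (deriv h) := by
    have : deriv h = fun t => deriv s_n t / En - deriv s_a t / Ea := funext hderivh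
    rw [this]
    exact (hsn'cont.div_const _).sub (hsa'cont.div_const _)
  have hhτ : h τstar = 0 := by
    have : s_n τstar / En = s_a τstar / Ea := by
      field_simp
      linarith [hbalance]
    simp [hhdef, this]
  have hh'neg : deriv h τstar < 0 := by
    rw [hderivh]
    have h1 : deriv s_n τstar / En < 0 := div_neg_of_neg_of_pos hsn' hEn_pos
    have h2 : 0 < deriv s_a τstar / Ea := div_pos hsa' hEa_pos
    linarith
  -- find a neighborhood of τstar where deriv h < 0 and x > 0
  have hopen : IsOpen {x : ℝ | deriv h x < 0 ∧ 0 < x} :=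
    (isOpen_lt hh'cont continuous_const).inter (isOpen_lt continuous_const continuous_id)
  have hmem : τstar ∈ {x : ℝ | deriv h x < 0 ∧ 0 < x} := ⟨hh'neg, hτstar_pos⟩
  obtain ⟨δ, hδpos, hball⟩ := Metric.isOpen_iff.mp hopen τstar hmem
  set a : ℝ := τstar - δ / 2 with ha
  set b : ℝ := τstar + δ / 2 with hb
  have hsub : Set.Icc a b ⊆ {x : ℝ | deriv h x < 0 ∧ 0 < x} := by
    intro x hx
    apply hball
    rw [Metric.mem_ball, Real.dist_eq, abs_lt]
    simp only [Set.mem_Icc, ha, hb] at hx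
    constructor <;> linarith [hx.1, hx.2]
  have hτab : τstar ∈ Set.Icc a b := by
    constructor <;> simp [ha, hb] <;> linarith
  -- h is strictly decreasing on Icc a b
  have hanti : StrictAntiOn h (Set.Icc a b) := by
    apply strictAntiOn_of_deriv_neg (convex_Icc a b) hhdiff.continuous.continuousOn
    intro x hx
    rw [interior_Icc] at hx
    exact (hsub (Set.Ioo_subset_Icc_self hx)).1
  -- the function g
  set g : ℝ → ℝ := fun t =>
    (∫ x in (0 : ℝ)..t, x * s_n x) / En - (∫ x in (0 : ℝ)..t, x * s_a x) / Ea with hgdef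
  have hfn_cont : Continuous (fun x : ℝ => x * s_n x) := continuous_id.mul hsn_cont
  have hfa_cont : Continuous (fun x : ℝ => x * s_a x) := continuous_id.mul hsa_cont
  have hg' : ∀ t, HasDerivAt g (t * h t) t := by
    intro t
    have hFn : HasDerivAt (fun u => ∫ x in (0 : ℝ)..u, x * s_n x) (t * s_n t) t :=
      intervalIntegral.integral_hasDerivAt_right (hfn_cont.intervalIntegrable 0 t)
        (hfn_cont.stronglyMeasurableAtFilter _ _) hfn_cont.continuousAt
    have hFa : HasDerivAt (fun u => ∫ x in (0 : ℝ)..u, x * s_a x) (t * s_a t) t :=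
      intervalIntegral.integral_hasDerivAt_right (hfa_cont.intervalIntegrable 0 t)
        (hfa_cont.stronglyMeasurableAtFilter _ _) hfa_cont.continuousAt
    have := (hFn.div_const En).fun_sub (hFa.div_const Ea)
    refine this.congr_deriv ?_
    show _ = t * (s_n t / En - s_a t / Ea)
    ring
  have hgdiff : Differentiable ℝ g := fun t => (hg' t).differentiableAt
  have hgderiv : ∀ t, deriv g t = t * h t := fun t => (hg' t).deriv
  -- g ≤ g τstar on Icc a b
  have hmax : ∀ t ∈ Set.Icc a b, g t ≤ g τstar := by
    intro t ht
    rcases le_total t τstar with hle | hge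
    · -- g monotone on Icc a τstar
      have hmono : MonotoneOn g (Set.Icc a τstar) := by
        apply monotoneOn_of_deriv_nonneg (convex_Icc a τstar) hgdiff.continuous.continuousOn
          hgdiff.differentiableOn
        intro x hx
        rw [interior_Icc] at hx
        have hxab : x ∈ Set.Icc a b := ⟨le_of_lt hx.1, le_trans (le_of_lt hx.2) hτab.2⟩
        have hxpos : 0 < x := (hsub hxab).2
        have hhx : 0 ≤ h x := by
          have := hanti hxab hτab hx.2
          rw [hhτ] at this
          exact this.le
        rw [hgderiv]
        exact mul_nonneg hxpos.le hhx
      exact hmono ⟨ht.1, hle⟩ ⟨hτab.1, le_refl _⟩ hle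
    · have hmono : AntitoneOn g (Set.Icc τstar b) := by
        apply antitoneOn_of_deriv_nonpos (convex_Icc τstar b) hgdiff.continuous.continuousOn
          hgdiff.differentiableOn
        intro x hx
        rw [interior_Icc] at hx
        have hxab : x ∈ Set.Icc a b := ⟨le_trans hτab.1 (le_of_lt hx.1), le_of_lt hx.2⟩
        have hxpos : 0 < x := (hsub hxab).2
        have hhx : h x ≤ 0 := by
          have := hanti hτab hxab hx.1
          rw [hhτ] at this
          exact this.le
        rw [hgderiv]
        exact mul_nonpos_of_nonneg_of_nonpos hxpos.le hhx
      exact hmono ⟨le_refl _, hτab.2⟩ ⟨hge, ht.2⟩ hge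
  -- continuity of τ at qstar
  have hτcont : ContinuousAt τ qstar := (hτ' qstar hqstar).continuousAt
  rw [Metric.continuousAt_iff] at hτcont
  obtain ⟨ε, hεpos, hε⟩ := hτcont (δ / 2) (by linarith)
  refine ⟨ε, hεpos, fun q hq hqε => ?_⟩
  have hdist : dist (τ q) (τ qstar) < δ / 2 := hε (by rwa [Real.dist_eq])
  rw [Real.dist_eq, ← hτstar, abs_lt] at hdist
  have hτqab : τ q ∈ Set.Icc a b := ⟨by simp [ha]; linarith, by simp [hb]; linarith⟩
  have : g (τ q) ≤ g τstar := hmax _ hτqab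
  rw [hR q, hR qstar, ← hτstar]
  simpa [hgdef] using this
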